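/- For a finite nonempty set A, η > 0, and Q₁, Q₂ : A → ℝ, the softmax distributions π_i(a) = exp(ηQ_i(a))/Σ_{a'}exp(ηQ_i(a')) satisfy ‖π₁ − π₂‖_TV ≤ η·‖Q₁ − Q₂‖_∞, where TV is half the ℓ1 distance. -/

import Mathlib

open Real Finset

/-- For `0 ≤ t`, `sinh t ≤ t * cosh t`. -/
lemma sinh_le_mul_cosh {t : ℝ} (ht : 0 ≤ t) : Real.sinh t ≤ t * Real.cosh t := by
  have hmono : MonotoneOn (fun s : ℝ => s * Real.cosh s - Real.sinh s) (Set.Ici 0) := by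
    apply monotoneOn_of_deriv_nonneg (convex_Ici 0)
    · exact (((continuous_id.mul Real.continuous_cosh).sub Real.continuous_sinh)).continuousOn
    · intro x hx
      exact (((hasDerivAt_id x).mul (Real.hasDerivAt_cosh x)).sub
        (Real.hasDerivAt_sinh x)).differentiableAt.differentiableWithinAt
    · intro x hx
      have hx0 : 0 < x := by simpa using hx
      have hd : HasDerivAt (fun s : ℝ => s * Real.cosh s - Real.sinh s)
          (1 * Real.cosh x + x * Real.sinh x - Real.cosh x) x :=
        ((hasDerivAt_id x).mul (Real.hasDerivAt_cosh x)).sub (Real.hasDerivAt_sinh x)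
      rw [hd.deriv]
      have : (0:ℝ) ≤ x * Real.sinh x :=
        mul_nonneg hx0.le (by rw [Real.sinh_nonneg_iff]; exact hx0.le)
      nlinarith
  have h := hmono (Set.self_mem_Ici) (Set.mem_Ici.mpr ht) ht
  simp only [Real.sinh_zero, Real.cosh_zero, zero_mul, sub_zero] at h
  linarith

/-- Key inequality: `|exp x - exp y| ≤ (exp x + exp y)/2 * |x - y|`. -/
lemma abs_exp_sub_exp_le (x y : ℝ) :
    |Real.exp x - Real.exp y| ≤ (Real.exp x + Real.exp y) / 2 * |x - y| := by
  wlog hxy : x ≤ y generalizing x y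
  · have := this y x (le_of_not_ge hxy)
    rwa [abs_sub_comm, abs_sub_comm y x, add_comm] at this
  have hs0 : 0 ≤ (y - x) / 2 := by linarith
  have e1 : Real.exp ((x + y) / 2) * Real.exp ((y - x) / 2) = Real.exp y := by
    rw [← Real.exp_add]; ring_nf
  have e2 : Real.exp ((x + y) / 2) * Real.exp (-((y - x) / 2)) = Real.exp x := by
    rw [← Real.exp_add]; ring_nf
  have h1 : Real.exp y - Real.exp x = 2 * Real.exp ((x + y) / 2) * Real.sinh ((y - x) / 2) := by
    rw [Real.sinh_eq]; nlinarith [e1, e2]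
  have h2 : Real.exp x + Real.exp y = 2 * Real.exp ((x + y) / 2) * Real.cosh ((y - x) / 2) := by
    rw [Real.cosh_eq]; nlinarith [e1, e2]
  have habs1 : |Real.exp x - Real.exp y| = Real.exp y - Real.exp x := by
    rw [abs_sub_comm, abs_of_nonneg (by linarith [Real.exp_le_exp.mpr hxy])]
  have habs2 : |x - y| = 2 * ((y - x) / 2) := by
    rw [abs_of_nonpos (by linarith)]; ring
  rw [habs1, habs2, h1, h2]
  have hE : 0 < Real.exp ((x + y) / 2) := Real.exp_pos _
  have := sinh_le_mul_cosh hs0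
  nlinarith [Real.cosh_pos (x := (y - x) / 2)]

/-- The softmax (tempered-policy) map is Lipschitz in the sup norm:
TV(π₁, π₂) ≤ η·‖Q₁ − Q₂‖_∞, with TV equal to half the ℓ1 distance. -/
theorem stmt12 {A : Type*} [Fintype A] [Nonempty A] (η : ℝ) (hη : 0 < η)
    (Q₁ Q₂ : A → ℝ)
    (π₁ π₂ : A → ℝ)
    (hπ₁ : ∀ a, π₁ a = Real.exp (η * Q₁ a) / ∑ a', Real.exp (η * Q₁ a'))
    (hπ₂ : ∀ a, π₂ a = Real.exp (η * Q₂ a) / ∑ a', Real.exp (η * Q₂ a')) :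
    (1 / 2) * ∑ a, |π₁ a - π₂ a| ≤ η * ⨆ a, |Q₁ a - Q₂ a| := by
  set M : ℝ := ⨆ a, |Q₁ a - Q₂ a| with hMdef
  have hMa : ∀ a, |Q₁ a - Q₂ a| ≤ M := fun a =>
    le_ciSup (f := fun a => |Q₁ a - Q₂ a|) (Set.Finite.bddAbove (Set.finite_range _)) a
  have hM0 : 0 ≤ M := le_trans (abs_nonneg _) (hMa (Classical.arbitrary A))
  set Z₁ : ℝ := ∑ a', Real.exp (η * Q₁ a') with hZ₁def
  set Z₂ : ℝ := ∑ a', Real.exp (η * Q₂ a') with hZ₂def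
  have hZ₁ : 0 < Z₁ := Finset.sum_pos (fun _ _ => Real.exp_pos _) Finset.univ_nonempty
  have hZ₂ : 0 < Z₂ := Finset.sum_pos (fun _ _ => Real.exp_pos _) Finset.univ_nonempty
  have key : ∑ a, |π₁ a - π₂ a| ≤ 2 * (η * M) := by
    have step1 : ∀ a, |π₁ a - π₂ a|
        = |Real.exp (η * Q₁ a) * Z₂ - Real.exp (η * Q₂ a) * Z₁| / (Z₁ * Z₂) := by
      intro a
      rw [hπ₁ a, hπ₂ a, div_sub_div _ _ hZ₁.ne' hZ₂.ne', abs_div,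
        abs_of_pos (mul_pos hZ₁ hZ₂), mul_comm Z₁ (Real.exp (η * Q₂ a))]
    have step2 : ∀ a, |Real.exp (η * Q₁ a) * Z₂ - Real.exp (η * Q₂ a) * Z₁|
        ≤ ∑ b, (Real.exp (η * Q₁ a + η * Q₂ b) + Real.exp (η * Q₂ a + η * Q₁ b)) * (η * M) := by
      intro a
      have hnum : Real.exp (η * Q₁ a) * Z₂ - Real.exp (η * Q₂ a) * Z₁
          = ∑ b, (Real.exp (η * Q₁ a + η * Q₂ b) - Real.exp (η * Q₂ a + η * Q₁ b)) := by
        rw [Finset.sum_sub_distrib, hZ₁def, hZ₂def, Finset.mul_sum, Finset.mul_sum]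
        simp [Real.exp_add]
      rw [hnum]
      refine (Finset.abs_sum_le_sum_abs _ _).trans (Finset.sum_le_sum fun b _ => ?_)
      have hkey := abs_exp_sub_exp_le (η * Q₁ a + η * Q₂ b) (η * Q₂ a + η * Q₁ b)
      have hdist : |η * Q₁ a + η * Q₂ b - (η * Q₂ a + η * Q₁ b)| ≤ 2 * (η * M) := by
        have : η * Q₁ a + η * Q₂ b - (η * Q₂ a + η * Q₁ b)
            = η * ((Q₁ a - Q₂ a) - (Q₁ b - Q₂ b)) := by ring
        rw [this, abs_mul, abs_of_pos hη]
        have := abs_sub (Q₁ a - Q₂ a) (Q₁ b - Q₂ b)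
        have h1 := hMa a
        have h2 := hMa b
        nlinarith
      have hpos : (0:ℝ) < Real.exp (η * Q₁ a + η * Q₂ b) + Real.exp (η * Q₂ a + η * Q₁ b) :=
        by positivity
      nlinarith
    have hdouble : ∑ a, ∑ b, (Real.exp (η * Q₁ a + η * Q₂ b)
        + Real.exp (η * Q₂ a + η * Q₁ b)) = 2 * (Z₁ * Z₂) := by
      simp only [Real.exp_add, Finset.sum_add_distrib, ← Finset.mul_sum]
      rw [← Finset.sum_mul, ← Finset.sum_mul, hZ₁def, hZ₂def]
      ring
    calc ∑ a, |π₁ a - π₂ a|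
        = (∑ a, |Real.exp (η * Q₁ a) * Z₂ - Real.exp (η * Q₂ a) * Z₁|) / (Z₁ * Z₂) := by
          rw [Finset.sum_div]; exact Finset.sum_congr rfl fun a _ => step1 a
      _ ≤ (∑ a, ∑ b, (Real.exp (η * Q₁ a + η * Q₂ b) + Real.exp (η * Q₂ a + η * Q₁ b)) * (η * M))
            / (Z₁ * Z₂) := by
          gcongr with a _
          exact step2 a
      _ = 2 * (Z₁ * Z₂) * (η * M) / (Z₁ * Z₂) := by
          simp only [← Finset.sum_mul]
          rw [hdouble]
      _ = 2 * (η * M) := by field_simp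
  linarith
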